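/- arXiv:1703.04806 — 3 statements merged into one kernel-verified Lean document; each statement's English description precedes it below -/
import Mathlib

section
/- Let T = (S,Σ,κ) be an STS and B ∈ Σ with avoid-set B̃. Then for every probability measure μ on S, Prob_μ(F B̃) = Prob_μ(FG B̃) = Prob_μ(GF B̃). -/
open MeasureTheory ProbabilityTheory ENNReal Filter Topology

namespace STS

variable {S : Type*} [MeasurableSpace S]

/-- Probability of the cylinder `Cyl(A 0, …, A n)` for the Markov chain with kernel `κ`
and initial distribution `μ`. -/
noncomputable def cylProb (κ : Kernel S S) : ℕ → Measure S → (ℕ → Set S) → ℝ≥0∞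
  | 0, μ, A => μ (A 0)
  | n + 1, μ, A => ∫⁻ s in A 0, cylProb κ n (κ s) (fun i => A (i + 1)) ∂μ

/-- `P` assigns to each initial (probability) distribution the path measure (on `ℕ → S`,
with the product σ-algebra) of the time-homogeneous Markov chain with transition kernel `κ`,
as given by the Ionescu–Tulcea construction: it is the unique probability measure giving
cylinders their prescribed probabilities. -/
def IsPathMeasure (κ : Kernel S S) (P : Measure S → Measure (ℕ → S)) : Prop :=
  ∀ μ : Measure S, IsProbabilityMeasure μ →
    IsProbabilityMeasure (P μ) ∧
    ∀ (n : ℕ) (A : ℕ → Set S), (∀ i, MeasurableSet (A i)) →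
      P μ {ρ | ∀ i ≤ n, ρ i ∈ A i} = cylProb κ n μ A

/-- The path event `F B`: eventually reach `B`. -/
def evF (B : Set S) : Set (ℕ → S) := {ρ | ∃ k, ρ k ∈ B}

/-- The path event `F≤n B`. -/
def evFle (n : ℕ) (B : Set S) : Set (ℕ → S) := {ρ | ∃ k ≤ n, ρ k ∈ B}

/-- The path event `F≥p B`. -/
def evFge (p : ℕ) (B : Set S) : Set (ℕ → S) := {ρ | ∃ k, p ≤ k ∧ ρ k ∈ B}

/-- The path event `GF B`: visit `B` infinitely often. -/
def evGF (B : Set S) : Set (ℕ → S) := {ρ | ∀ n, ∃ k, n ≤ k ∧ ρ k ∈ B}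

/-- The path event `FG B`: eventually stay in `B` forever. -/
def evFG (B : Set S) : Set (ℕ → S) := {ρ | ∃ n, ∀ k, n ≤ k → ρ k ∈ B}

/-- The until event `B' U B`. -/
def evU (B' B : Set S) : Set (ℕ → S) := {ρ | ∃ k, ρ k ∈ B ∧ ∀ j < k, ρ j ∈ B'}

/-- The bounded until event `B' U≤n B`. -/
def evUle (n : ℕ) (B' B : Set S) : Set (ℕ → S) := {ρ | ∃ k ≤ n, ρ k ∈ B ∧ ∀ j < k, ρ j ∈ B'}

/-- The avoid-set `B̃` of `B`: states from which `B` is reached with probability `0`. -/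
def avoid (P : Measure S → Measure (ℕ → S)) (B : Set S) : Set S :=
  {s | P (Measure.dirac s) (evF B) = 0}

/-- `T` is decisive w.r.t. `B` from `μ`. -/
def Decisive (P : Measure S → Measure (ℕ → S)) (μ : Measure S) (B : Set S) : Prop :=
  P μ (evF B ∪ evF (avoid P B)) = 1

/-- `T` is strongly decisive w.r.t. `B` from `μ`. -/
def StronglyDecisive (P : Measure S → Measure (ℕ → S)) (μ : Measure S) (B : Set S) : Prop :=
  P μ (evGF B ∪ evF (avoid P B)) = 1

/-- `T` is persistently decisive w.r.t. `B` from `μ`. -/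
def PersistentlyDecisive (P : Measure S → Measure (ℕ → S)) (μ : Measure S) (B : Set S) : Prop :=
  ∀ p : ℕ, P μ (evFge p B ∪ evFge p (avoid P B)) = 1

/-- `PreProb(B)`: measurable sets `B'` from which `B` is reached in one step with positive
probability, whatever the initial distribution concentrated on `B'`. -/
def PreProb (P : Measure S → Measure (ℕ → S)) (B : Set S) : Set (Set S) :=
  {B' | MeasurableSet B' ∧ ∀ μ' : Measure S, IsProbabilityMeasure μ' → μ' B' = 1 →
    0 < P μ' {ρ | ρ 0 ∈ B' ∧ ρ 1 ∈ B}}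

/-- `T` is fair w.r.t. `B` from `μ`. -/
def Fair (P : Measure S → Measure (ℕ → S)) (μ : Measure S) (B : Set S) : Prop :=
  ∀ B' ∈ PreProb P B, 0 < P μ (evGF B') →
    P μ (evGF B ∩ evGF B') = P μ (evGF B')

/-- The one-step measure transformer `Ω_T`. -/
noncomputable def Omega (κ : Kernel S S) (μ : Measure S) : Measure S :=
  μ.bind (fun s => κ s)

/-- Two measures are qualitatively equivalent if they have the same null (measurable) sets. -/
def QualEquiv {T : Type*} [MeasurableSpace T] (μ ν : Measure T) : Prop :=
  ∀ A : Set T, MeasurableSet A → (μ A = 0 ↔ ν A = 0)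

/-- `T₂ = (S₂,κ₂)` is an `α`-abstraction of `T₁ = (S₁,κ₁)`. -/
def IsAbstraction {S₁ S₂ : Type*} [MeasurableSpace S₁] [MeasurableSpace S₂]
    (κ₁ : Kernel S₁ S₁) (κ₂ : Kernel S₂ S₂) (α : S₁ → S₂) : Prop :=
  ∀ μ : Measure S₁, IsProbabilityMeasure μ →
    QualEquiv (Measure.map α (Omega κ₁ μ)) (Omega κ₂ (Measure.map α μ))



section Aux

variable (κ : Kernel S S) [IsMarkovKernel κ]

lemma cylProb_succ (n : ℕ) (μ : Measure S) (A : ℕ → Set S) :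
    cylProb κ (n + 1) μ A = ∫⁻ s in A 0, cylProb κ n (κ s) (fun i => A (i + 1)) ∂μ := rfl

lemma cylProb_le_one : ∀ (n : ℕ) (μ : Measure S), IsProbabilityMeasure μ →
    ∀ A : ℕ → Set S, cylProb κ n μ A ≤ 1
  | 0, μ, hμ, A => prob_le_one
  | n+1, μ, hμ, A => by
      rw [cylProb_succ]
      calc ∫⁻ s in A 0, cylProb κ n (κ s) (fun i => A (i+1)) ∂μ
          ≤ ∫⁻ _ in A 0, 1 ∂μ :=
            lintegral_mono fun s => cylProb_le_one n (κ s) inferInstance _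
        _ = μ (A 0) := setLIntegral_one _
        _ ≤ 1 := prob_le_one

lemma measurable_cylProb_kernel : ∀ (n : ℕ) (A : ℕ → Set S), (∀ i, MeasurableSet (A i)) →
    Measurable fun s => cylProb κ n (κ s) A
  | 0, A, hA => Kernel.measurable_coe κ (hA 0)
  | n+1, A, hA =>
      Measurable.setLIntegral_kernel
        (measurable_cylProb_kernel n _ (fun i => hA (i+1))) (hA 0)

lemma cylProb_dirac_succ (n : ℕ) (s : S) (A : ℕ → Set S) (hA : ∀ i, MeasurableSet (A i)) :
    cylProb κ (n+1) (Measure.dirac s) A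
      = (A 0).indicator (fun t => cylProb κ n (κ t) (fun i => A (i+1))) s := by
  classical
  rw [cylProb_succ,
    setLIntegral_dirac' (measurable_cylProb_kernel κ n _ fun i => hA (i+1)) (hA 0)]
  by_cases h : s ∈ A 0
  · rw [if_pos h, Set.indicator_of_mem h]
  · rw [if_neg h, Set.indicator_of_notMem h]

lemma cylProb_eq_lintegral (n : ℕ) (μ : Measure S) (A : ℕ → Set S)
    (hA : ∀ i, MeasurableSet (A i)) :
    cylProb κ n μ A = ∫⁻ t, cylProb κ n (Measure.dirac t) A ∂μ := by
  cases n with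
  | zero =>
      show μ (A 0) = ∫⁻ t, Measure.dirac t (A 0) ∂μ
      rw [← lintegral_indicator_one (hA 0)]
      exact lintegral_congr fun t => (Measure.dirac_apply' t (hA 0)).symm
  | succ n =>
      rw [cylProb_succ, ← lintegral_indicator (hA 0)]
      exact lintegral_congr fun t => (cylProb_dirac_succ κ n t A hA).symm

lemma measurable_cylProb_dirac (n : ℕ) (A : ℕ → Set S) (hA : ∀ i, MeasurableSet (A i)) :
    Measurable fun s => cylProb κ n (Measure.dirac s) A := by
  cases n with
  | zero =>
      have h : (fun s => cylProb κ 0 (Measure.dirac s) A) = (A 0).indicator 1 := by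
        funext s; exact Measure.dirac_apply' s (hA 0)
      rw [h]; exact measurable_one.indicator (hA 0)
  | succ n =>
      have h : (fun s => cylProb κ (n+1) (Measure.dirac s) A)
          = (A 0).indicator (fun t => cylProb κ n (κ t) (fun i => A (i+1))) := by
        funext s; exact cylProb_dirac_succ κ n s A hA
      rw [h]
      exact (measurable_cylProb_kernel κ n _ fun i => hA (i+1)).indicator (hA 0)

variable (P : Measure S → Measure (ℕ → S))

lemma avoid_eq (hP : IsPathMeasure κ P) (B : Set S) (hB : MeasurableSet B) :
    avoid P B = ⋂ n, {s | cylProb κ n (Measure.dirac s) (fun _ => Bᶜ) = 1} := by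
  ext s
  have hprob : IsProbabilityMeasure (P (Measure.dirac s)) := (hP _ inferInstance).1
  have hcyl := (hP (Measure.dirac s) inferInstance).2
  have hFle : ∀ n : ℕ, MeasurableSet (evFle n B) := by
    intro n
    have h : evFle n B = ⋃ k ∈ Set.Iic n, (fun ρ : ℕ → S => ρ k) ⁻¹' B := by
      ext ρ; simp [evFle]
    rw [h]
    exact MeasurableSet.biUnion (Set.to_countable _)
      fun k _ => (measurable_pi_apply k) hB
  simp only [avoid, Set.mem_setOf_eq, Set.mem_iInter]
  have hevF : evF B = ⋃ n, evFle n B := by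
    ext ρ
    constructor
    · rintro ⟨k, hk⟩; exact Set.mem_iUnion.2 ⟨k, ⟨k, le_rfl, hk⟩⟩
    · intro h
      obtain ⟨n, hn⟩ := Set.mem_iUnion.1 h
      obtain ⟨k, _, hk⟩ := hn
      exact ⟨k, hk⟩
  rw [hevF, measure_iUnion_null_iff]
  refine forall_congr' fun n => ?_
  have hcompl : (evFle n B)ᶜ = {ρ : ℕ → S | ∀ i ≤ n, ρ i ∈ Bᶜ} := by
    ext ρ; simp [evFle]
  rw [← prob_compl_eq_one_iff (hFle n), hcompl, hcyl n (fun _ => Bᶜ) (fun _ => hB.compl)]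

lemma measurable_avoid (hP : IsPathMeasure κ P) (B : Set S) (hB : MeasurableSet B) :
    MeasurableSet (avoid P B) := by
  rw [avoid_eq κ P hP B hB]
  exact MeasurableSet.iInter fun n =>
    (measurable_cylProb_dirac κ n _ fun _ => hB.compl) (measurableSet_singleton 1)

lemma kernel_avoid (hP : IsPathMeasure κ P) (B : Set S) (hB : MeasurableSet B)
    (s : S) (hs : s ∈ avoid P B) : κ s (avoid P B)ᶜ = 0 := by
  have hmem : ∀ n, cylProb κ n (Measure.dirac s) (fun _ => Bᶜ) = 1 := by
    have h := hs
    rw [avoid_eq κ P hP B hB] at h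
    simpa [Set.mem_iInter] using h
  have hone : ∀ n, cylProb κ n (κ s) (fun _ => Bᶜ) = 1 := by
    intro n
    have h := hmem (n+1)
    rw [cylProb_dirac_succ κ n s _ (fun _ => hB.compl)] at h
    by_cases hsB : s ∈ Bᶜ
    · simpa [Set.indicator_of_mem hsB] using h
    · rw [Set.indicator_of_notMem hsB] at h
      exact absurd h (by simp)
  have hnull : ∀ n, κ s {t | cylProb κ n (Measure.dirac t) (fun _ => Bᶜ) ≠ 1} = 0 := by
    intro n
    set g := fun t => cylProb κ n (Measure.dirac t) (fun _ => Bᶜ) with hg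
    have hgm : Measurable g := measurable_cylProb_dirac κ n _ (fun _ => hB.compl)
    have hgle : ∀ t, g t ≤ 1 := fun t => cylProb_le_one κ n _ inferInstance _
    have hint : ∫⁻ t, g t ∂(κ s) = 1 := by
      rw [← cylProb_eq_lintegral κ n _ _ (fun _ => hB.compl)]
      exact hone n
    have hsub : ∫⁻ t, (1 - g t) ∂(κ s) = 0 := by
      rw [lintegral_sub hgm (by rw [hint]; exact one_ne_top) (ae_of_all _ hgle)]
      simp [hint]
    have hae0 : ∀ᵐ t ∂(κ s), 1 - g t = 0 :=
      (lintegral_eq_zero_iff (measurable_const.sub hgm)).1 hsub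
    have hae : ∀ᵐ t ∂(κ s), g t = 1 :=
      hae0.mono fun t ht => le_antisymm (hgle t) (tsub_eq_zero_iff_le.1 ht)
    exact ae_iff.1 hae
  have hsub : (avoid P B)ᶜ ⊆
      ⋃ n, {t | cylProb κ n (Measure.dirac t) (fun _ => Bᶜ) ≠ 1} := by
    rw [avoid_eq κ P hP B hB, Set.compl_iInter]
    intro t ht
    obtain ⟨n, hn⟩ := Set.mem_iUnion.1 ht
    exact Set.mem_iUnion.2 ⟨n, by simpa using hn⟩
  exact measure_mono_null hsub (measure_iUnion_null hnull)

lemma cylProb_stay (C : Set S) (hC : MeasurableSet C)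
    (hker : ∀ s ∈ C, κ s Cᶜ = 0) :
    ∀ (m : ℕ) (ν : Measure S), IsProbabilityMeasure ν → ν Cᶜ = 0 →
      cylProb κ m ν (fun i => if i = m then Cᶜ else Set.univ) = 0 := by
  intro m
  induction m with
  | zero => intro ν _ hν; simpa [cylProb] using hν
  | succ m ih =>
      intro ν _ hν
      show (∫⁻ t in Set.univ, cylProb κ m (κ t)
          (fun i => if i + 1 = m + 1 then Cᶜ else Set.univ) ∂ν) = 0
      rw [setLIntegral_univ]
      have hshift : (fun i : ℕ => if i + 1 = m + 1 then Cᶜ else Set.univ)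
          = (fun i : ℕ => if i = m then Cᶜ else Set.univ) := by
        funext i
        by_cases h : i = m
        · simp [h]
        · have h2 : i + 1 ≠ m + 1 := by omega
          simp [h, h2]
      have hmem : ∀ᵐ t ∂ν, t ∈ C := by
        rw [ae_iff]
        exact hν
      have hae : ∀ᵐ t ∂ν, cylProb κ m (κ t)
          (fun i => if i + 1 = m + 1 then Cᶜ else Set.univ) = 0 := by
        refine hmem.mono fun t ht => ?_
        rw [hshift]
        exact ih (κ t) inferInstance (hker t ht)
      rw [lintegral_congr_ae hae, lintegral_zero]

lemma cylProb_trap (C : Set S) (hC : MeasurableSet C)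
    (hker : ∀ s ∈ C, κ s Cᶜ = 0) (d : ℕ) :
    ∀ (k : ℕ) (μ : Measure S), IsProbabilityMeasure μ →
      cylProb κ (k + d + 1) μ
        (fun i => if i = k + d + 1 then Cᶜ else if i = k then C else Set.univ) = 0 := by
  intro k
  induction k with
  | zero =>
      intro μ hμ
      rw [Nat.zero_add]
      show (∫⁻ s in C, cylProb κ d (κ s)
          (fun i => if i + 1 = d + 1 then Cᶜ else if i + 1 = 0 then C else Set.univ) ∂μ) = 0
      have hshift : (fun i : ℕ => if i + 1 = d + 1 then Cᶜ else if i + 1 = 0 then C else Set.univ)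
          = (fun i : ℕ => if i = d then Cᶜ else Set.univ) := by
        funext i
        by_cases h : i = d
        · simp [h]
        · have h2 : i + 1 ≠ d + 1 := by omega
          simp [h, h2]
      have hzero : ∀ s ∈ C, cylProb κ d (κ s)
          (fun i => if i + 1 = d + 1 then Cᶜ else if i + 1 = 0 then C else Set.univ) = 0 := by
        intro s hs
        rw [hshift]
        exact cylProb_stay κ C hC hker d (κ s) inferInstance (hker s hs)
      rw [setLIntegral_congr_fun hC hzero, lintegral_zero]
  | succ k ih =>
      intro μ hμ
      have hn : k + 1 + d + 1 = (k + d + 1) + 1 := by omega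
      rw [hn]
      show (∫⁻ s in Set.univ, cylProb κ (k + d + 1) (κ s)
          (fun i => if i + 1 = k + d + 1 + 1 then Cᶜ else if i + 1 = k + 1 then C
            else Set.univ) ∂μ) = 0
      rw [setLIntegral_univ]
      have hshift : (fun i : ℕ => if i + 1 = k + d + 1 + 1 then Cᶜ
            else if i + 1 = k + 1 then C else Set.univ)
          = (fun i : ℕ => if i = k + d + 1 then Cᶜ else if i = k then C else Set.univ) := by
        funext i
        by_cases h : i = k + d + 1
        · simp [h]
        · by_cases h2 : i = k
          · have h3 : i + 1 ≠ k + d + 1 + 1 := by omega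
            simp [h, h2, h3]
          · have h3 : i + 1 ≠ k + d + 1 + 1 := by omega
            have h4 : i + 1 ≠ k + 1 := by omega
            simp [h, h2, h3, h4]
      have hzero : ∀ s : S, cylProb κ (k + d + 1) (κ s)
          (fun i => if i + 1 = k + d + 1 + 1 then Cᶜ else if i + 1 = k + 1 then C
            else Set.univ) = 0 := by
        intro s
        rw [hshift]
        exact ih (κ s) inferInstance
      rw [lintegral_congr hzero, lintegral_zero]

lemma measure_event_zero (hP : IsPathMeasure κ P) (B : Set S) (hB : MeasurableSet B)
    (μ : Measure S) (hμ : IsProbabilityMeasure μ) (k d : ℕ) :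
    P μ {ρ : ℕ → S | ρ k ∈ avoid P B ∧ ρ (k + d + 1) ∈ (avoid P B)ᶜ} = 0 := by
  set C := avoid P B with hCdef
  have hC : MeasurableSet C := measurable_avoid κ P hP B hB
  have hker : ∀ s ∈ C, κ s Cᶜ = 0 := fun s hs => kernel_avoid κ P hP B hB s hs
  have hpat : ∀ i : ℕ,
      MeasurableSet (if i = k + d + 1 then Cᶜ else if i = k then C else Set.univ) := by
    intro i; split_ifs
    exacts [hC.compl, hC, MeasurableSet.univ]
  have hset : {ρ : ℕ → S | ρ k ∈ C ∧ ρ (k + d + 1) ∈ Cᶜ}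
      = {ρ : ℕ → S | ∀ i ≤ k + d + 1,
          ρ i ∈ (fun i => if i = k + d + 1 then Cᶜ else if i = k then C else Set.univ) i} := by
    ext ρ
    constructor
    · rintro ⟨h1, h2⟩ i hi
      by_cases hik : i = k + d + 1
      · simpa [hik] using h2
      · by_cases hik2 : i = k
        · subst hik2; simpa [hik] using h1
        · simp [hik, hik2]
    · intro h
      refine ⟨?_, ?_⟩
      · have hk := h k (by omega)
        simpa [show ¬ (k = k + d + 1) by omega] using hk
      · have hj := h (k + d + 1) le_rfl
        simpa using hj
  rw [hset, (hP μ hμ).2 _ _ hpat]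
  exact cylProb_trap κ C hC hker d k μ hμ

end Aux

/-- for every probability measure `μ`,
`Prob_μ(F B̃) = Prob_μ(FG B̃) = Prob_μ(GF B̃)`. -/
theorem statement_1 {S : Type*} [MeasurableSpace S]
    (κ : Kernel S S) [IsMarkovKernel κ]
    (P : Measure S → Measure (ℕ → S)) (hP : IsPathMeasure κ P)
    (B : Set S) (hB : MeasurableSet B) :
    ∀ μ : Measure S, IsProbabilityMeasure μ →
      P μ (evF (avoid P B)) = P μ (evFG (avoid P B)) ∧
      P μ (evFG (avoid P B)) = P μ (evGF (avoid P B)) := by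
  intro μ hμ
  set C := avoid P B with hCdef
  have hFGsubGF : evFG C ⊆ evGF C := by
    rintro ρ ⟨n, hn⟩ m
    exact ⟨max n m, le_max_right _ _, hn _ (le_max_left _ _)⟩
  have hGFsubF : evGF C ⊆ evF C := fun ρ h => (h 0).imp fun k hk => hk.2
  have hdiff : evF C \ evFG C ⊆
      ⋃ k, ⋃ d, {ρ : ℕ → S | ρ k ∈ C ∧ ρ (k + d + 1) ∈ Cᶜ} := by
    rintro ρ ⟨⟨k, hk⟩, hnot⟩
    simp only [evFG, Set.mem_setOf_eq] at hnot
    push_neg at hnot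
    obtain ⟨j, hj1, hj2⟩ := hnot (k + 1)
    refine Set.mem_iUnion.2 ⟨k, Set.mem_iUnion.2 ⟨j - k - 1, ⟨hk, ?_⟩⟩⟩
    rw [show k + (j - k - 1) + 1 = j by omega]
    exact hj2
  have hzero : P μ (evF C \ evFG C) = 0 :=
    measure_mono_null hdiff (measure_iUnion_null fun k => measure_iUnion_null fun d =>
      measure_event_zero κ P hP B hB μ hμ k d)
  have hFle : P μ (evF C) ≤ P μ (evFG C) := by
    calc P μ (evF C) ≤ P μ (evF C ∩ evFG C) + P μ (evF C \ evFG C) :=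
          measure_le_inter_add_diff _ _ _
      _ ≤ P μ (evFG C) + 0 := add_le_add (measure_mono Set.inter_subset_right) hzero.le
      _ = P μ (evFG C) := add_zero _
  have h1 : P μ (evFG C) ≤ P μ (evGF C) := measure_mono hFGsubGF
  have h2 : P μ (evGF C) ≤ P μ (evF C) := measure_mono hGFsubF
  exact ⟨le_antisymm hFle (measure_mono (hFGsubGF.trans hGFsubF)),
    le_antisymm h1 (h2.trans hFle)⟩

end STS
end

section
/- Let T = (S,Σ,κ) be an STS and B ∈ Σ. Then the following three properties are equivalent: (i) T is decisive w.r.t. B from every initial probability measure (D(B)); (ii) T is strongly decisive w.r.t. B from every initial probability measure (SD(B)); (iii) T is persistently decisive w.r.t. B from every initial probability measure (PD(B)). -/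
open MeasureTheory ProbabilityTheory ENNReal Filter Topology

namespace STS

variable {S : Type*} [MeasurableSpace S]

/-! ### Auxiliary lemmas -/

section Aux

/-- The family of cylinder sets. -/
def cylSets : Set (Set (ℕ → S)) :=
  {t | ∃ (n : ℕ) (A : ℕ → Set S), (∀ i, MeasurableSet (A i)) ∧ t = {ρ | ∀ i ≤ n, ρ i ∈ A i}}

lemma measurableSet_cyl {n : ℕ} {A : ℕ → Set S} (hA : ∀ i, MeasurableSet (A i)) :
    MeasurableSet {ρ : ℕ → S | ∀ i ≤ n, ρ i ∈ A i} := by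
  have : {ρ : ℕ → S | ∀ i ≤ n, ρ i ∈ A i} =
      ⋂ i, {ρ : ℕ → S | i ≤ n → ρ i ∈ A i} := by
    ext ρ; simp [Set.mem_iInter]
  rw [this]
  refine MeasurableSet.iInter fun i => ?_
  by_cases h : i ≤ n
  · have : {ρ : ℕ → S | i ≤ n → ρ i ∈ A i} = (fun ρ : ℕ → S => ρ i) ⁻¹' A i := by
      ext ρ; simp [h]
    rw [this]; exact (measurable_pi_apply i) (hA i)
  · have : {ρ : ℕ → S | i ≤ n → ρ i ∈ A i} = Set.univ := by
      ext ρ; simp [h]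
    rw [this]; exact MeasurableSet.univ

lemma isPiSystem_cylSets : IsPiSystem (cylSets (S := S)) := by
  rintro _ ⟨n₁, A₁, hA₁, rfl⟩ _ ⟨n₂, A₂, hA₂, rfl⟩ -
  refine ⟨max n₁ n₂, fun i =>
    (if i ≤ n₁ then A₁ i else Set.univ) ∩ (if i ≤ n₂ then A₂ i else Set.univ), ?_, ?_⟩
  · intro i
    apply MeasurableSet.inter
    · split
      · exact hA₁ i
      · exact MeasurableSet.univ
    · split
      · exact hA₂ i
      · exact MeasurableSet.univ
  · ext ρ
    simp only [Set.mem_inter_iff, Set.mem_setOf_eq, Set.mem_ite_univ_right]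
    constructor
    · rintro ⟨h₁, h₂⟩ i hi
      exact ⟨fun h => h₁ i h, fun h => h₂ i h⟩
    · intro h
      exact ⟨fun i hi => (h i (le_trans hi (le_max_left _ _))).1 hi,
             fun i hi => (h i (le_trans hi (le_max_right _ _))).2 hi⟩

lemma generateFrom_cylSets :
    MeasurableSpace.generateFrom (cylSets (S := S)) = MeasurableSpace.pi := by
  apply le_antisymm
  · rw [MeasurableSpace.generateFrom_le_iff]
    rintro _ ⟨n, A, hA, rfl⟩
    exact measurableSet_cyl hA
  · have hle : ∀ k : ℕ, MeasurableSpace.comap (fun ρ : ℕ → S => ρ k) inferInstance ≤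
        MeasurableSpace.generateFrom (cylSets (S := S)) := by
      intro k t ht
      obtain ⟨A, hA, rfl⟩ := ht
      apply MeasurableSpace.measurableSet_generateFrom
      refine ⟨k, fun i => if i = k then A else Set.univ, fun i => ?_, ?_⟩
      · dsimp only
        split
        · exact hA
        · exact MeasurableSet.univ
      · ext ρ
        simp only [Set.mem_preimage, Set.mem_setOf_eq]
        constructor
        · intro h i hi
          by_cases hik : i = k
          · subst hik; simpa using h
          · simp [hik]
        · intro h
          have := h k le_rfl
          simpa using this
    exact iSup_le hle

/-- Measurability of `cylProb` in the initial distribution, for kernels. -/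
lemma measurable_cylProb (κ : Kernel S S) [IsSFiniteKernel κ] :
    ∀ (n : ℕ) (η : Kernel S S) [IsSFiniteKernel η]
      (A : ℕ → Set S), (∀ i, MeasurableSet (A i)) →
      Measurable fun t => cylProb κ n (η t) A := by
  intro n
  induction n with
  | zero =>
    intro η _ A hA
    simpa [cylProb] using η.measurable_coe (hA 0)
  | succ n ih =>
    intro η _ A hA
    have hg : Measurable fun s => cylProb κ n (κ s) (fun i => A (i + 1)) :=
      ih κ (fun i => A (i + 1)) (fun i => hA (i + 1))
    simp only [cylProb]
    exact Measurable.setLIntegral_kernel_prod_right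
      (f := fun (_ : S) s => cylProb κ n (κ s) fun i => A (i + 1))
      (hg.comp measurable_snd) (hA 0)

lemma cylProb_bind (κ : Kernel S S) [IsSFiniteKernel κ] :
    ∀ (n : ℕ) (μ : Measure S) (A : ℕ → Set S), (∀ i, MeasurableSet (A i)) →
      cylProb κ n (μ.bind κ) A = ∫⁻ s, cylProb κ n (κ s) A ∂μ := by
  intro n
  induction n with
  | zero =>
    intro μ A hA
    simp only [cylProb]
    exact Measure.bind_apply (hA 0) κ.measurable.aemeasurable
  | succ n ih =>
    intro μ A hA
    have hg : Measurable fun s => cylProb κ n (κ s) (fun i => A (i + 1)) :=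
      measurable_cylProb κ n κ _ (fun i => hA (i + 1))
    simp only [cylProb]
    rw [← lintegral_indicator (hA 0), Measure.lintegral_bind κ.measurable.aemeasurable (hg.indicator (hA 0)).aemeasurable]
    congr 1
    ext s
    rw [lintegral_indicator (hA 0)]

/-- The shift map on paths. -/
def shift (p : ℕ) (ρ : ℕ → S) : ℕ → S := fun i => ρ (i + p)

lemma measurable_shift (p : ℕ) : Measurable (shift (S := S) p) :=
  measurable_pi_lambda _ fun i => measurable_pi_apply (i + p)

lemma isProbabilityMeasure_bind (κ : Kernel S S) [IsMarkovKernel κ]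
    (μ : Measure S) (hμ : IsProbabilityMeasure μ) : IsProbabilityMeasure (μ.bind κ) := by
  constructor
  rw [Measure.bind_apply MeasurableSet.univ κ.measurable.aemeasurable]
  simp

lemma isProbabilityMeasure_iter (κ : Kernel S S) [IsMarkovKernel κ] :
    ∀ (p : ℕ) (μ : Measure S), IsProbabilityMeasure μ →
      IsProbabilityMeasure ((fun m : Measure S => m.bind κ)^[p] μ) := by
  intro p
  induction p with
  | zero => intro μ hμ; exact hμ
  | succ p ih =>
    intro μ hμ
    rw [Function.iterate_succ_apply]
    exact ih _ (isProbabilityMeasure_bind κ μ hμ)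

lemma map_shift_one (κ : Kernel S S) [IsMarkovKernel κ]
    (P : Measure S → Measure (ℕ → S)) (hP : IsPathMeasure κ P)
    (μ : Measure S) (hμ : IsProbabilityMeasure μ) :
    (P μ).map (shift 1) = P (μ.bind κ) := by
  have hν : IsProbabilityMeasure (μ.bind κ) := isProbabilityMeasure_bind κ μ hμ
  obtain ⟨hPμ, hcylμ⟩ := hP μ hμ
  obtain ⟨hPν, hcylν⟩ := hP _ hν
  refine ext_of_generate_finite cylSets generateFrom_cylSets.symm isPiSystem_cylSets ?_ ?_
  · rintro _ ⟨n, A, hA, rfl⟩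
    rw [Measure.map_apply (measurable_shift 1) (measurableSet_cyl hA)]
    set A' : ℕ → Set S := fun i => Nat.rec Set.univ (fun j _ => A j) i with hA'def
    have hA' : ∀ i, MeasurableSet (A' i) := by
      intro i
      cases i with
      | zero => exact MeasurableSet.univ
      | succ j => exact hA j
    have hpre : shift 1 ⁻¹' {ρ | ∀ i ≤ n, ρ i ∈ A i} = {ρ | ∀ i ≤ n + 1, ρ i ∈ A' i} := by
      ext ρ
      simp only [Set.mem_preimage, Set.mem_setOf_eq]
      constructor
      · intro h i hi
        cases i with
        | zero => exact Set.mem_univ _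
        | succ j => exact h j (Nat.succ_le_succ_iff.mp hi)
      · intro h i hi
        exact h (i + 1) (Nat.succ_le_succ hi)
    rw [hpre, hcylμ (n + 1) A' hA', hcylν n A hA]
    show (∫⁻ s in A' 0, cylProb κ n (κ s) (fun i => A' (i + 1)) ∂μ) = cylProb κ n (μ.bind κ) A
    have h1 : (fun i => A' (i + 1)) = A := rfl
    have h2 : A' 0 = Set.univ := rfl
    rw [h1, h2, Measure.restrict_univ, cylProb_bind κ n μ A hA]
  · rw [Measure.map_apply (measurable_shift 1) MeasurableSet.univ]
    simp

lemma map_shift (κ : Kernel S S) [IsMarkovKernel κ]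
    (P : Measure S → Measure (ℕ → S)) (hP : IsPathMeasure κ P) :
    ∀ (p : ℕ) (μ : Measure S), IsProbabilityMeasure μ →
      (P μ).map (shift p) = P ((fun m : Measure S => m.bind κ)^[p] μ) := by
  intro p
  induction p with
  | zero =>
    intro μ hμ
    rw [show shift (S := S) 0 = id from rfl, Measure.map_id]
    rfl
  | succ p ih =>
    intro μ hμ
    have hcomp : shift (S := S) (p + 1) = shift p ∘ shift 1 := rfl
    rw [hcomp, ← Measure.map_map (measurable_shift p) (measurable_shift 1),
      map_shift_one κ P hP μ hμ, ih _ (isProbabilityMeasure_bind κ μ hμ),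
      Function.iterate_succ_apply]

lemma measurableSet_evF {B : Set S} (hB : MeasurableSet B) : MeasurableSet (evF B) := by
  have : evF B = ⋃ k, (fun ρ : ℕ → S => ρ k) ⁻¹' B := by
    ext ρ; simp [evF]
  rw [this]
  exact MeasurableSet.iUnion fun k => (measurable_pi_apply k) hB

lemma measurableSet_evFge {p : ℕ} {B : Set S} (hB : MeasurableSet B) :
    MeasurableSet (evFge p B) := by
  have : evFge p B = ⋃ k, {ρ : ℕ → S | p ≤ k ∧ ρ k ∈ B} := by
    ext ρ; simp [evFge]
  rw [this]
  refine MeasurableSet.iUnion fun k => ?_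
  by_cases h : p ≤ k
  · have : {ρ : ℕ → S | p ≤ k ∧ ρ k ∈ B} = (fun ρ : ℕ → S => ρ k) ⁻¹' B := by
      ext ρ; simp [h]
    rw [this]; exact (measurable_pi_apply k) hB
  · have : {ρ : ℕ → S | p ≤ k ∧ ρ k ∈ B} = ∅ := by
      ext ρ; simp [h]
    rw [this]; exact MeasurableSet.empty

lemma measurableSet_evGF {B : Set S} (hB : MeasurableSet B) : MeasurableSet (evGF B) := by
  have : evGF B = ⋂ n, evFge n B := by
    ext ρ; simp [evGF, evFge]
  rw [this]
  exact MeasurableSet.iInter fun n => measurableSet_evFge hB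

lemma measurableSet_avoid (κ : Kernel S S) [IsMarkovKernel κ]
    (P : Measure S → Measure (ℕ → S)) (hP : IsPathMeasure κ P)
    {B : Set S} (hB : MeasurableSet B) : MeasurableSet (avoid P B) := by
  classical
  set Ak : ℕ → ℕ → Set S := fun k i => if i = k then Bᶜ else Set.univ with hAkdef
  have hAk : ∀ k i, MeasurableSet (Ak k i) := by
    intro k i; simp only [hAkdef]; split
    · exact hB.compl
    · exact MeasurableSet.univ
  have hcylk : ∀ k, {ρ : ℕ → S | ∀ i ≤ k, ρ i ∈ Ak k i} = {ρ : ℕ → S | ρ k ∈ B}ᶜ := by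
    intro k
    ext ρ
    simp only [Set.mem_setOf_eq, Set.mem_compl_iff, hAkdef]
    constructor
    · intro h hk
      have := h k le_rfl
      simp at this
      exact this hk
    · intro h i hi
      by_cases hik : i = k
      · subst hik; simp [h]
      · simp [hik]
    
  have key : avoid P B = ⋂ k, {s : S | cylProb κ k (Measure.dirac s) (Ak k) = 1} := by
    ext s
    have hds : IsProbabilityMeasure (Measure.dirac s) := inferInstance
    obtain ⟨hPd, hcyld⟩ := hP (Measure.dirac s) hds
    simp only [avoid, Set.mem_setOf_eq, Set.mem_iInter]
    have hF : evF B = ⋃ k, {ρ : ℕ → S | ρ k ∈ B} := by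
      ext ρ; simp [evF]
    rw [hF, measure_iUnion_null_iff]
    constructor
    · intro h k
      have h1 := h k
      have h2 := hcyld k (Ak k) (hAk k)
      rw [hcylk k] at h2
      rw [← h2]
      have hm : MeasurableSet {ρ : ℕ → S | ρ k ∈ B} := (measurable_pi_apply k) hB
      exact (prob_compl_eq_one_iff hm).mpr h1
    · intro h k
      have h2 := hcyld k (Ak k) (hAk k)
      rw [hcylk k] at h2
      have hm : MeasurableSet {ρ : ℕ → S | ρ k ∈ B} := (measurable_pi_apply k) hB
      exact (prob_compl_eq_one_iff hm).mp (by rw [h2]; exact h k)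
  rw [key]
  refine MeasurableSet.iInter fun k => ?_
  have hmeas : Measurable fun s : S => cylProb κ k (Measure.dirac s) (Ak k) := by
    have := measurable_cylProb κ k (Kernel.id (α := S)) (Ak k) (hAk k)
    simpa [Kernel.id_apply] using this
  exact hmeas (measurableSet_singleton 1)

end Aux

/-- `D(B)`, `SD(B)` and `PD(B)` (decisiveness from every initial probability
measure) are all equivalent. -/
theorem statement_5 {S : Type*} [MeasurableSpace S]
    (κ : Kernel S S) [IsMarkovKernel κ]
    (P : Measure S → Measure (ℕ → S)) (hP : IsPathMeasure κ P)
    (B : Set S) (hB : MeasurableSet B) :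
    ((∀ μ : Measure S, IsProbabilityMeasure μ → Decisive P μ B) ↔
      (∀ μ : Measure S, IsProbabilityMeasure μ → StronglyDecisive P μ B)) ∧
    ((∀ μ : Measure S, IsProbabilityMeasure μ → StronglyDecisive P μ B) ↔
      (∀ μ : Measure S, IsProbabilityMeasure μ → PersistentlyDecisive P μ B)) := by
  have havoid : MeasurableSet (avoid P B) := measurableSet_avoid κ P hP hB
  -- SD → D
  have hSD_D : (∀ μ : Measure S, IsProbabilityMeasure μ → StronglyDecisive P μ B) →
      (∀ μ : Measure S, IsProbabilityMeasure μ → Decisive P μ B) := by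
    intro h μ hμ
    haveI := (hP μ hμ).1
    have h1 := h μ hμ
    refine le_antisymm prob_le_one ?_
    rw [← h1]
    refine measure_mono (Set.union_subset_union_left _ ?_)
    intro ρ hρ
    obtain ⟨k, -, hk⟩ := hρ 0
    exact ⟨k, hk⟩
  -- D → PD
  have hD_PD : (∀ μ : Measure S, IsProbabilityMeasure μ → Decisive P μ B) →
      (∀ μ : Measure S, IsProbabilityMeasure μ → PersistentlyDecisive P μ B) := by
    intro h μ hμ p
    haveI := (hP μ hμ).1
    set ν : Measure S := (fun m : Measure S => m.bind κ)^[p] μ with hνdef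
    have hν : IsProbabilityMeasure ν := isProbabilityMeasure_iter κ p μ hμ
    have hmap : (P μ).map (shift p) = P ν := map_shift κ P hP p μ hμ
    have hD := h ν hν
    have hmeas : MeasurableSet (evF B ∪ evF (avoid P B)) :=
      (measurableSet_evF hB).union (measurableSet_evF havoid)
    have hpre : P μ (shift p ⁻¹' (evF B ∪ evF (avoid P B))) = 1 := by
      rw [← Measure.map_apply (measurable_shift p) hmeas, hmap]
      exact hD
    refine le_antisymm prob_le_one ?_
    rw [← hpre]
    refine measure_mono ?_
    intro ρ hρ
    rcases hρ with h' | h'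
    · obtain ⟨k, hk⟩ := h'
      exact Or.inl ⟨k + p, Nat.le_add_left p k, hk⟩
    · obtain ⟨k, hk⟩ := h'
      exact Or.inr ⟨k + p, Nat.le_add_left p k, hk⟩
  -- PD → SD
  have hPD_SD : (∀ μ : Measure S, IsProbabilityMeasure μ → PersistentlyDecisive P μ B) →
      (∀ μ : Measure S, IsProbabilityMeasure μ → StronglyDecisive P μ B) := by
    intro h μ hμ
    haveI := (hP μ hμ).1
    have hXmeas : MeasurableSet (evGF B ∪ evF (avoid P B)) :=
      (measurableSet_evGF hB).union (measurableSet_evF havoid)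
    have hnull : P μ ((evGF B ∪ evF (avoid P B))ᶜ) = 0 := by
      have hsub : (evGF B ∪ evF (avoid P B))ᶜ ⊆
          ⋃ p, (evFge p B ∪ evFge p (avoid P B))ᶜ := by
        intro ρ hρ
        by_contra hc
        simp only [Set.mem_iUnion, Set.mem_compl_iff, not_exists, not_not] at hc
        apply hρ
        by_cases hgf : ρ ∈ evGF B
        · exact Or.inl hgf
        · refine Or.inr ?_
          simp only [evGF, Set.mem_setOf_eq] at hgf
          push_neg at hgf
          obtain ⟨n, hn⟩ := hgf
          rcases hc n with h' | h'
          · obtain ⟨k, hk1, hk2⟩ := h'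
            exact absurd hk2 (hn k hk1)
          · obtain ⟨k, -, hk2⟩ := h'
            exact ⟨k, hk2⟩
      refine measure_mono_null hsub (measure_iUnion_null fun p => ?_)
      have hm : MeasurableSet (evFge p B ∪ evFge p (avoid P B)) :=
        (measurableSet_evFge hB).union (measurableSet_evFge havoid)
      exact (prob_compl_eq_zero_iff hm).mpr (h μ hμ p)
    exact (prob_compl_eq_zero_iff hXmeas).mp hnull
  exact ⟨⟨fun h => hPD_SD (hD_PD h), fun h => hSD_D h⟩,
    ⟨fun h => hD_PD (hSD_D h), fun h => hPD_SD h⟩⟩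

end STS
end

section
/- Let T₁ = (S₁,Σ₁,κ₁) and T₂ = (S₂,Σ₂,κ₂) be STSs and α : S₁ → S₂ a measurable map such that T₂ is an α-abstraction of T₁. Then for every B ∈ Σ₂, the avoid-set in T₁ of α⁻¹(B) equals the preimage under α of the avoid-set in T₂ of B: {s ∈ S₁ | Prob^{T₁}_{δ_s}(F α⁻¹(B)) = 0} = α⁻¹({t ∈ S₂ | Prob^{T₂}_{δ_t}(F B) = 0}). -/
open MeasureTheory ProbabilityTheory ENNReal Filter Topology

namespace STS

variable {S : Type*} [MeasurableSpace S]

section Aux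

/-- survival function: probability of staying in `Cᶜ` for `n+1` steps starting from `s`. -/
noncomputable def stay (κ : Kernel S S) (C : Set S) : ℕ → S → ℝ≥0∞
  | 0 => Cᶜ.indicator 1
  | n + 1 => Cᶜ.indicator (fun s => ∫⁻ t, stay κ C n t ∂(κ s))

lemma measurable_stay (κ : Kernel S S) [IsSFiniteKernel κ] {C : Set S} (hC : MeasurableSet C) (n : ℕ) :
    Measurable (stay κ C n) := by
  induction n with
  | zero => exact measurable_one.indicator hC.compl
  | succ n ih =>
    exact (Measurable.lintegral_kernel_prod_right (κ := κ)
      (f := fun _ t => stay κ C n t) (ih.comp measurable_snd)).indicator hC.compl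

lemma stay_le_one (κ : Kernel S S) [IsMarkovKernel κ] (C : Set S) (n : ℕ) (s : S) :
    stay κ C n s ≤ 1 := by
  induction n generalizing s with
  | zero =>
    simp only [stay]
    by_cases h : s ∈ Cᶜ <;> simp [h]
  | succ n ih =>
    refine Set.indicator_le' (fun t _ => ?_) (fun _ _ => zero_le_one) s
    calc ∫⁻ u, stay κ C n u ∂(κ t) ≤ ∫⁻ _, 1 ∂(κ t) := lintegral_mono ih
    _ = 1 := by simp

lemma cylProb_const (κ : Kernel S S) [IsMarkovKernel κ] {C : Set S} (hC : MeasurableSet C)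
    (n : ℕ) (μ : Measure S) :
    cylProb κ n μ (fun _ => Cᶜ) = ∫⁻ s, stay κ C n s ∂μ := by
  induction n generalizing μ with
  | zero => simp [cylProb, stay, lintegral_indicator_one hC.compl]
  | succ n ih =>
    have h1 : cylProb κ (n+1) μ (fun _ => Cᶜ)
        = ∫⁻ s in Cᶜ, ∫⁻ t, stay κ C n t ∂(κ s) ∂μ := by
      simp only [cylProb]
      exact setLIntegral_congr_fun hC.compl (fun s _ => ih (κ s))
    rw [h1, stay, ← lintegral_indicator hC.compl]

lemma lintegral_stay_eq_one_iff (κ : Kernel S S) [IsMarkovKernel κ] {C : Set S}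
    (hC : MeasurableSet C) (n : ℕ) (μ : Measure S) [IsProbabilityMeasure μ] :
    ∫⁻ s, stay κ C n s ∂μ = 1 ↔ μ {s | stay κ C n s ≠ 1} = 0 := by
  have hm := measurable_stay κ hC n
  have hset : {s | stay κ C n s ≠ 1} = {s | (1 : ℝ≥0∞) - stay κ C n s ≠ 0} := by
    ext s
    simp only [Set.mem_setOf_eq, ne_eq, tsub_eq_zero_iff_le]
    constructor
    · intro h h1; exact h (le_antisymm (stay_le_one κ C n s) h1)
    · intro h h1; exact h (h1 ▸ le_rfl)
  constructor
  · intro h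
    have hsub : ∫⁻ s, ((1 : ℝ≥0∞) - stay κ C n s) ∂μ = 0 := by
      rw [lintegral_sub hm (by rw [h]; exact one_ne_top)
        (Filter.Eventually.of_forall (stay_le_one κ C n)), h, lintegral_one, measure_univ,
        tsub_self]
    have h0 := (lintegral_eq_zero_iff (measurable_const.sub hm)).mp hsub
    rw [hset]
    simpa [Filter.EventuallyEq, ae_iff] using h0
  · intro h
    have hae : stay κ C n =ᵐ[μ] fun _ => 1 := by
      rw [Filter.EventuallyEq, ae_iff]
      exact h
    rw [lintegral_congr_ae hae, lintegral_one, measure_univ]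

lemma isProbabilityMeasure_omega (κ : Kernel S S) [IsMarkovKernel κ] (μ : Measure S)
    [IsProbabilityMeasure μ] : IsProbabilityMeasure (Omega κ μ) := by
  constructor
  rw [Omega, Measure.bind_apply MeasurableSet.univ (Kernel.measurable κ).aemeasurable]
  simp

lemma step_iff (κ : Kernel S S) [IsMarkovKernel κ] {C : Set S} (hC : MeasurableSet C)
    (n : ℕ) (μ : Measure S) [IsProbabilityMeasure μ] :
    ∫⁻ s, stay κ C (n+1) s ∂μ = 1 ↔
      (μ C = 0 ∧ ∫⁻ s, stay κ C n s ∂(Omega κ μ) = 1) := by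
  have hm := measurable_stay κ hC n
  have hG : Measurable fun s => ∫⁻ t, stay κ C n t ∂(κ s) :=
    Measurable.lintegral_kernel_prod_right (κ := κ) (f := fun _ t => stay κ C n t)
      (hm.comp measurable_snd)
  have hGle : ∀ s, (∫⁻ t, stay κ C n t ∂(κ s)) ≤ 1 := fun s => by
    calc (∫⁻ t, stay κ C n t ∂(κ s)) ≤ ∫⁻ _, 1 ∂(κ s) := lintegral_mono (stay_le_one κ C n)
    _ = 1 := by simp
  have hbind : ∫⁻ s, stay κ C n s ∂(Omega κ μ) = ∫⁻ s, ∫⁻ t, stay κ C n t ∂(κ s) ∂μ :=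
    Measure.lintegral_bind (Kernel.measurable κ).aemeasurable hm.aemeasurable
  have hL : ∫⁻ s, stay κ C (n+1) s ∂μ = ∫⁻ s in Cᶜ, ∫⁻ t, stay κ C n t ∂(κ s) ∂μ := by
    rw [stay, lintegral_indicator hC.compl]
  have hsplit : ∫⁻ s, ∫⁻ t, stay κ C n t ∂(κ s) ∂μ
      = (∫⁻ s in C, ∫⁻ t, stay κ C n t ∂(κ s) ∂μ)
        + ∫⁻ s in Cᶜ, ∫⁻ t, stay κ C n t ∂(κ s) ∂μ :=
    (lintegral_add_compl _ hC).symm ▸ rfl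
  have hCle : ∀ ν : Measure S, (∫⁻ s in C, ∫⁻ t, stay κ C n t ∂(κ s) ∂ν) ≤ ν C := by
    intro ν
    calc (∫⁻ s in C, ∫⁻ t, stay κ C n t ∂(κ s) ∂ν) ≤ ∫⁻ _ in C, 1 ∂ν :=
      lintegral_mono fun s => hGle s
    _ = ν C := by simp
  rw [hL, hbind, hsplit]
  constructor
  · intro h
    have hCc : μ Cᶜ = 1 := by
      refine le_antisymm prob_le_one ?_
      calc (1 : ℝ≥0∞) = ∫⁻ s in Cᶜ, ∫⁻ t, stay κ C n t ∂(κ s) ∂μ := h.symm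
      _ ≤ ∫⁻ _ in Cᶜ, 1 ∂μ := lintegral_mono fun s => hGle s
      _ = μ Cᶜ := by simp
    have hC0 : μ C = 0 := (prob_compl_eq_one_iff hC).mp hCc
    refine ⟨hC0, ?_⟩
    have : (∫⁻ s in C, ∫⁻ t, stay κ C n t ∂(κ s) ∂μ) = 0 :=
      le_antisymm (le_trans (hCle μ) hC0.le) (zero_le)
    rw [this, zero_add, h]
  · rintro ⟨hC0, h⟩
    have : (∫⁻ s in C, ∫⁻ t, stay κ C n t ∂(κ s) ∂μ) = 0 :=
      le_antisymm (le_trans (hCle μ) hC0.le) (zero_le)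
    rw [this, zero_add] at h
    exact h

lemma evF_zero_iff (κ : Kernel S S) [IsMarkovKernel κ] {P : Measure S → Measure (ℕ → S)}
    (hP : IsPathMeasure κ P) {C : Set S} (hC : MeasurableSet C)
    (μ : Measure S) (hμ : IsProbabilityMeasure μ) :
    P μ (evF C) = 0 ↔ ∀ n, ∫⁻ s, stay κ C n s ∂μ = 1 := by
  obtain ⟨hprob, hcyl⟩ := hP μ hμ
  haveI := hprob
  have hUnion : evF C = ⋃ n, evFle n C := by
    ext ρ
    simp only [evF, evFle, Set.mem_setOf_eq, Set.mem_iUnion]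
    exact ⟨fun ⟨k, hk⟩ => ⟨k, k, le_rfl, hk⟩, fun ⟨n, k, _, hk⟩ => ⟨k, hk⟩⟩
  have hmle : ∀ n, MeasurableSet (evFle n C) := by
    intro n
    have : evFle n C = ⋃ k, ⋃ _ : k ≤ n, (fun ρ : ℕ → S => ρ k) ⁻¹' C := by
      ext ρ; simp [evFle]
    rw [this]
    exact MeasurableSet.iUnion fun k => MeasurableSet.iUnion fun _ => (measurable_pi_apply k) hC
  have hcompl : ∀ n, (evFle n C)ᶜ = {ρ : ℕ → S | ∀ i ≤ n, ρ i ∈ Cᶜ} := by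
    intro n; ext ρ
    simp only [evFle, Set.mem_compl_iff, Set.mem_setOf_eq]
    push_neg
    rfl
  rw [hUnion, measure_iUnion_null_iff]
  refine forall_congr' fun n => ?_
  rw [← prob_compl_eq_one_iff (hmle n), hcompl n,
    hcyl n (fun _ => Cᶜ) (fun _ => hC.compl), cylProb_const κ hC n μ]

lemma main_ind {S₁ S₂ : Type*} [MeasurableSpace S₁] [MeasurableSpace S₂]
    (κ₁ : Kernel S₁ S₁) [IsMarkovKernel κ₁] (κ₂ : Kernel S₂ S₂) [IsMarkovKernel κ₂]
    (α : S₁ → S₂) (hα : Measurable α) (habs : IsAbstraction κ₁ κ₂ α)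
    {B : Set S₂} (hB : MeasurableSet B) :
    ∀ (n : ℕ) (μ : Measure S₁), IsProbabilityMeasure μ →
      (∫⁻ s, stay κ₁ (α ⁻¹' B) n s ∂μ = 1 ↔ ∫⁻ t, stay κ₂ B n t ∂(Measure.map α μ) = 1) := by
  have hB1 : MeasurableSet (α ⁻¹' B) := hα hB
  intro n
  induction n with
  | zero =>
    intro μ hμ
    haveI := hμ
    haveI : IsProbabilityMeasure (Measure.map α μ) := Measure.isProbabilityMeasure_map hα.aemeasurable
    simp only [stay, lintegral_indicator_one hB1.compl, lintegral_indicator_one hB.compl]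
    rw [prob_compl_eq_one_iff hB1, prob_compl_eq_one_iff hB, Measure.map_apply hα hB]
  | succ n ih =>
    intro μ hμ
    haveI := hμ
    haveI hν : IsProbabilityMeasure (Measure.map α μ) := Measure.isProbabilityMeasure_map hα.aemeasurable
    haveI h1 : IsProbabilityMeasure (Omega κ₁ μ) := isProbabilityMeasure_omega κ₁ μ
    haveI h2 : IsProbabilityMeasure (Omega κ₂ (Measure.map α μ)) :=
      isProbabilityMeasure_omega κ₂ _
    haveI h3 : IsProbabilityMeasure (Measure.map α (Omega κ₁ μ)) :=
      Measure.isProbabilityMeasure_map hα.aemeasurable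
    have hmB : MeasurableSet {t | stay κ₂ B n t ≠ 1} := by
      have : {t | stay κ₂ B n t ≠ 1} = (stay κ₂ B n ⁻¹' {1})ᶜ := rfl
      rw [this]
      exact ((measurable_stay κ₂ hB n) (measurableSet_singleton 1)).compl
    rw [step_iff κ₁ hB1 n μ, step_iff κ₂ hB n (Measure.map α μ), Measure.map_apply hα hB]
    refine and_congr Iff.rfl ?_
    rw [ih (Omega κ₁ μ) h1, lintegral_stay_eq_one_iff κ₂ hB n (Measure.map α (Omega κ₁ μ)),
      lintegral_stay_eq_one_iff κ₂ hB n (Omega κ₂ (Measure.map α μ))]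
    exact habs μ hμ _ hmB

end Aux

/-- under an `α`-abstraction, the avoid-set of `α⁻¹(B)` in `T₁` is the
preimage under `α` of the avoid-set of `B` in `T₂`. -/
theorem statement_8 {S₁ S₂ : Type*} [MeasurableSpace S₁] [MeasurableSpace S₂]
    (κ₁ : Kernel S₁ S₁) [IsMarkovKernel κ₁] (κ₂ : Kernel S₂ S₂) [IsMarkovKernel κ₂]
    (P₁ : Measure S₁ → Measure (ℕ → S₁)) (hP₁ : IsPathMeasure κ₁ P₁)
    (P₂ : Measure S₂ → Measure (ℕ → S₂)) (hP₂ : IsPathMeasure κ₂ P₂)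
    (α : S₁ → S₂) (hα : Measurable α) (habs : IsAbstraction κ₁ κ₂ α) :
    ∀ B : Set S₂, MeasurableSet B →
      avoid P₁ (α ⁻¹' B) = α ⁻¹' (avoid P₂ B) := by
  intro B hB
  have hB1 : MeasurableSet (α ⁻¹' B) := hα hB
  ext s
  rw [Set.mem_preimage]
  show P₁ (Measure.dirac s) (evF (α ⁻¹' B)) = 0 ↔ P₂ (Measure.dirac (α s)) (evF B) = 0
  rw [evF_zero_iff κ₁ hP₁ hB1 _ inferInstance, evF_zero_iff κ₂ hP₂ hB _ inferInstance]
  have hmap : Measure.map α (Measure.dirac s) = Measure.dirac (α s) := Measure.map_dirac' hα s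
  refine forall_congr' fun n => ?_
  rw [← hmap]
  exact main_ind κ₁ κ₂ α hα habs hB n (Measure.dirac s) inferInstance

end STS
end
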